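/- For n = 3 and for both sign choices, the identity m_{x_{21}−x_{22}±1} ∘ A_{22}^± ∘ A_{21}^± = m_{x_{21}−x_{22}∓1} ∘ A_{21}^± ∘ A_{22}^± holds in End_ℂ(L); equivalently, in any localization where x_{21}−x_{22}±1 is invertible, A_{22}^± A_{21}^± = ((x_{21}−x_{22}∓1)/(x_{21}−x_{22}±1)) · A_{21}^± A_{22}^±. -/

import Mathlib

open scoped BigOperators
open MvPolynomial

noncomputable section

/-- The polynomial ring `Λ = ℂ[x_{ki}]` (variables indexed by pairs `(k, i)`). -/
abbrev Lam : Type := MvPolynomial (ℕ × ℕ) ℂ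

/-- `L`, the field of fractions of `Λ`. -/
abbrev L : Type := FractionRing Lam

/-- The variable `x_{ki}` as an element of `L`. -/
def x (k i : ℕ) : L := algebraMap Lam L (X (k, i))

/-- The algebra automorphism of `Λ` sending `x_v ↦ x_v - 1` and fixing the other variables. -/
def shiftEquiv (v : ℕ × ℕ) : Lam ≃ₐ[ℂ] Lam :=
  AlgEquiv.ofAlgHom
    (aeval (fun w => if w = v then X w - 1 else X w))
    (aeval (fun w => if w = v then X w + 1 else X w))
    (by apply MvPolynomial.algHom_ext; intro w; by_cases h : w = v <;> simp [h])
    (by apply MvPolynomial.algHom_ext; intro w; by_cases h : w = v <;> simp [h])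

/-- The automorphism `δ^{ki}` of `L`, determined by `δ^{ki}(x_{ℓj}) = x_{ℓj} - δ_{ℓk}δ_{ij}`. -/
def δ (k i : ℕ) : L ≃ₐ[ℂ] L := IsFractionRing.algEquivOfAlgEquiv (shiftEquiv (k, i))

/-- Multiplication by `a ∈ L` as a `ℂ`-linear endomorphism `m_a` of `L`. -/
def mulOp (a : L) : Module.End ℂ L := LinearMap.mulLeft ℂ a

/-- A field automorphism of `L` as a `ℂ`-linear endomorphism of `L`. -/
def lin (e : L ≃ₐ[ℂ] L) : Module.End ℂ L := e.toLinearMap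

/-- The rational function `a_{ki}^+`. -/
def aP (k i : ℕ) : L :=
  -((∏ j ∈ Finset.Icc 1 (k + 1), (x (k + 1) j - x k i)) /
    ∏ j ∈ (Finset.Icc 1 k).erase i, (x k j - x k i))

/-- The rational function `a_{ki}^-`. -/
def aM (k i : ℕ) : L :=
  (∏ j ∈ Finset.Icc 1 (k - 1), (x (k - 1) j - x k i)) /
    ∏ j ∈ (Finset.Icc 1 k).erase i, (x k j - x k i)

/-- The operator `A_{ki}^+ = δ^{ki} ∘ m_{a_{ki}^+}`. -/
def Ap (k i : ℕ) : Module.End ℂ L := lin (δ k i) * mulOp (aP k i)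

/-- The operator `A_{ki}^- = (δ^{ki})^{-1} ∘ m_{a_{ki}^-}`. -/
def Am (k i : ℕ) : Module.End ℂ L := lin (δ k i).symm * mulOp (aM k i)

/-- The operator `X_k^+ = ∑_{i=1}^k A_{ki}^+`. -/
def Xp (k : ℕ) : Module.End ℂ L := ∑ i ∈ Finset.Icc 1 k, Ap k i

/-- The operator `X_k^- = ∑_{i=1}^k A_{ki}^-`. -/
def Xm (k : ℕ) : Module.End ℂ L := ∑ i ∈ Finset.Icc 1 k, Am k i

/-- The operator `X_{kk}`. -/
def Xd (k : ℕ) : Module.End ℂ L :=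
  mulOp ((∑ j ∈ Finset.Icc 1 k, (x k j + (j : L) - 1)) -
    ∑ i ∈ Finset.Icc 1 (k - 1), (x (k - 1) i + (i : L) - 1))

/-- The Vandermonde polynomial `∏_{1 ≤ i < j ≤ k} (x_{ki} - x_{kj})`, as an element of `L`. -/
def vand (k : ℕ) : L :=
  ∏ p ∈ (Finset.Icc 1 k ×ˢ Finset.Icc 1 k).filter (fun p => p.1 < p.2),
    (x k p.1 - x k p.2)

/-- The operator `𝒱_k = m_{∏_{i<j}(x_{ki} - x_{kj})}`. -/
def Vop (k : ℕ) : Module.End ℂ L := mulOp (vand k)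

/-- The generating set of `U_n`: the `X_k^±` for `1 ≤ k ≤ n-1` and the `X_{kk}` for `1 ≤ k ≤ n`. -/
def Ugens (n : ℕ) : Set (Module.End ℂ L) :=
  {u | ∃ k, 1 ≤ k ∧ k + 1 ≤ n ∧ (u = Xp k ∨ u = Xm k)} ∪
    {u | ∃ k, 1 ≤ k ∧ k ≤ n ∧ u = Xd k}

/-- `U_n`, the Gelfand–Tsetlin realization of `U(gl_n)` inside `End_ℂ(L)`. -/
def Ualg (n : ℕ) : Subalgebra ℂ (Module.End ℂ L) := Algebra.adjoin ℂ (Ugens n)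

/-- `𝒜(gl_n)`, the subalgebra generated by `U_n` together with `𝒱_2, …, 𝒱_n`. -/
def Agl (n : ℕ) : Subalgebra ℂ (Module.End ℂ L) :=
  Algebra.adjoin ℂ (Ugens n ∪ {u | ∃ k, 2 ≤ k ∧ k ≤ n ∧ u = Vop k})
set_option maxHeartbeats 4000000
set_option synthInstance.maxHeartbeats 1000000
set_option maxHeartbeats 2000000 in
lemma δ_x (k i l j : ℕ) :
    δ k i (x l j) = x l j - if (l, j) = (k, i) then 1 else 0 := by
  unfold δ x
  rw [IsFractionRing.algEquivOfAlgEquiv_algebraMap]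
  by_cases h : (l, j) = (k, i)
  · have hp : shiftEquiv (k, i) (X (l, j) : Lam) = X (l, j) - 1 := by simp [shiftEquiv, h]
    rw [hp, RingHom.map_sub, RingHom.map_one, if_pos h]
  · have hp : shiftEquiv (k, i) (X (l, j) : Lam) = X (l, j) := by simp [shiftEquiv, h]
    rw [hp, if_neg h, sub_zero]

set_option maxHeartbeats 2000000 in
lemma δ_symm_x (k i l j : ℕ) :
    (δ k i).symm (x l j) = x l j + if (l, j) = (k, i) then 1 else 0 := by
  unfold δ x
  rw [IsFractionRing.algEquivOfAlgEquiv_symm, IsFractionRing.algEquivOfAlgEquiv_algebraMap]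
  by_cases h : (l, j) = (k, i)
  · have hp : (shiftEquiv (k, i)).symm (X (l, j) : Lam) = X (l, j) + 1 := by
      simp [shiftEquiv, AlgEquiv.ofAlgHom_symm_apply, h]
    rw [hp, RingHom.map_add, RingHom.map_one, if_pos h]
  · have hp : (shiftEquiv (k, i)).symm (X (l, j) : Lam) = X (l, j) := by
      simp [shiftEquiv, AlgEquiv.ofAlgHom_symm_apply, h]
    rw [hp, if_neg h, add_zero]
lemma shift_X (v u : ℕ × ℕ) :
    shiftEquiv v (X u : Lam) = X u - if u = v then 1 else 0 := by
  by_cases h : u = v <;> simp [shiftEquiv, h]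

lemma shift_comm (v w : ℕ × ℕ) (p : Lam) :
    shiftEquiv v (shiftEquiv w p) = shiftEquiv w (shiftEquiv v p) := by
  have h : ((shiftEquiv v).toAlgHom.comp (shiftEquiv w).toAlgHom) =
      ((shiftEquiv w).toAlgHom.comp (shiftEquiv v).toAlgHom) := by
    apply MvPolynomial.algHom_ext
    intro u
    simp only [AlgHom.comp_apply, AlgEquiv.toAlgHom_eq_coe, AlgHom.coe_coe, shift_X,
      map_sub, apply_ite, map_one, map_zero]
    show shiftEquiv v (shiftEquiv w (X u)) = shiftEquiv w (shiftEquiv v (X u))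
    simp only [shift_X, map_sub, apply_ite, map_one, map_zero]
    split_ifs <;> ring
  exact congrArg (fun f => f p) (congrArg (DFunLike.coe) h)

set_option maxHeartbeats 2000000 in
lemma δ_comm (k i l j : ℕ) (z : L) :
    δ k i (δ l j z) = δ l j (δ k i z) := by
  obtain ⟨⟨p, q⟩, rfl⟩ := IsLocalization.mk'_surjective (nonZeroDivisors Lam) z
  dsimp only
  rw [IsLocalization.mk'_eq_mul_mk'_one]
  have hq : (algebraMap Lam L q : L) ≠ 0 :=
    IsFractionRing.to_map_ne_zero_of_mem_nonZeroDivisors q.2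
  have hmk : (IsLocalization.mk' L (1 : Lam) q) = (algebraMap Lam L q)⁻¹ := by
    rw [IsLocalization.mk'_eq_iff_eq_mul]
    field_simp
    exact map_one _
  rw [hmk]
  simp only [map_mul, map_inv₀]
  unfold δ
  rw [IsFractionRing.algEquivOfAlgEquiv_algebraMap, IsFractionRing.algEquivOfAlgEquiv_algebraMap,
    IsFractionRing.algEquivOfAlgEquiv_algebraMap, IsFractionRing.algEquivOfAlgEquiv_algebraMap,
    IsFractionRing.algEquivOfAlgEquiv_algebraMap, IsFractionRing.algEquivOfAlgEquiv_algebraMap,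
    IsFractionRing.algEquivOfAlgEquiv_algebraMap, IsFractionRing.algEquivOfAlgEquiv_algebraMap,
    shift_comm, shift_comm (k,i) (l,j) q]

lemma δ_symm_comm (k i l j : ℕ) (z : L) :
    (δ k i).symm ((δ l j).symm z) = (δ l j).symm ((δ k i).symm z) := by
  apply (δ k i).injective
  rw [AlgEquiv.apply_symm_apply]
  apply (δ l j).injective
  rw [AlgEquiv.apply_symm_apply, δ_comm l j k i, AlgEquiv.apply_symm_apply,
    AlgEquiv.apply_symm_apply]
set_option maxHeartbeats 2000000 in
lemma xsub_ne (a : ℂ) : x 2 1 - x 2 2 - algebraMap ℂ L a ≠ 0 := by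
  have he : x 2 1 - x 2 2 - algebraMap ℂ L a
      = algebraMap Lam L (X (2,1) - X (2,2) - C a) := by
    rw [RingHom.map_sub, RingHom.map_sub, IsScalarTower.algebraMap_apply ℂ Lam L a]
    rfl
  rw [he, Ne, IsFractionRing.to_map_eq_zero_iff]
  intro h0
  have h1 := congrArg (aeval (fun v : ℕ × ℕ => if v = (2,1) then a + 1 else 0)) h0
  simp at h1

lemma ne0 : x 2 1 - x 2 2 ≠ 0 := by simpa using xsub_ne 0
lemma neM : x 2 1 - x 2 2 - 1 ≠ 0 := by simpa using xsub_ne 1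
lemma neP : x 2 1 - x 2 2 + 1 ≠ 0 := by
  have := xsub_ne (-1); simpa [sub_neg_eq_add] using this

lemma aP21 : aP 2 1 =
    -((x 3 1 - x 2 1) * ((x 3 2 - x 2 1) * (x 3 3 - x 2 1)) / (x 2 2 - x 2 1)) := by
  unfold aP
  rw [show (Finset.Icc 1 3 : Finset ℕ) = {1, 2, 3} from by decide,
    show ((Finset.Icc 1 2).erase 1 : Finset ℕ) = {2} from by decide,
    Finset.prod_insert (by decide), Finset.prod_insert (by decide),
    Finset.prod_singleton, Finset.prod_singleton]

lemma aP22 : aP 2 2 =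
    -((x 3 1 - x 2 2) * ((x 3 2 - x 2 2) * (x 3 3 - x 2 2)) / (x 2 1 - x 2 2)) := by
  unfold aP
  rw [show (Finset.Icc 1 3 : Finset ℕ) = {1, 2, 3} from by decide,
    show ((Finset.Icc 1 2).erase 2 : Finset ℕ) = {1} from by decide,
    Finset.prod_insert (by decide), Finset.prod_insert (by decide),
    Finset.prod_singleton, Finset.prod_singleton]

lemma aM21 : aM 2 1 = (x 1 1 - x 2 1) / (x 2 2 - x 2 1) := by
  unfold aM
  rw [show (Finset.Icc 1 (2-1) : Finset ℕ) = {1} from by decide,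
    show ((Finset.Icc 1 2).erase 1 : Finset ℕ) = {2} from by decide,
    Finset.prod_singleton, Finset.prod_singleton]

lemma aM22 : aM 2 2 = (x 1 1 - x 2 2) / (x 2 1 - x 2 2) := by
  unfold aM
  rw [show (Finset.Icc 1 (2-1) : Finset ℕ) = {1} from by decide,
    show ((Finset.Icc 1 2).erase 2 : Finset ℕ) = {1} from by decide,
    Finset.prod_singleton, Finset.prod_singleton]
lemma genP {K : Type*} [Field K] (a b u v w g : K)
    (hA : a - (b - 1) ≠ 0) (h0' : b - a ≠ 0) (hB : b - (a - 1) ≠ 0) (h0 : a - b ≠ 0) :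
    (a - b + 1) *
      (-((u - (b - 1)) * ((v - (b - 1)) * (w - (b - 1))) / (a - (b - 1))) *
        (-((u - (a - 1)) * ((v - (a - 1)) * (w - (a - 1))) / (b - a)) * g)) =
    (a - b - 1) *
      (-((u - (a - 1)) * ((v - (a - 1)) * (w - (a - 1))) / (b - (a - 1))) *
        (-((u - (b - 1)) * ((v - (b - 1)) * (w - (b - 1))) / (a - b)) * g)) := by
  field_simp
  ring

lemma genM {K : Type*} [Field K] (a b t g : K)
    (hC : a - (b + 1) ≠ 0) (h0' : b - a ≠ 0) (hD : b - (a + 1) ≠ 0) (h0 : a - b ≠ 0) :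
    (a - b - 1) * ((t - (b + 1)) / (a - (b + 1)) * ((t - (a + 1)) / (b - a) * g)) =
    (a - b + 1) * ((t - (a + 1)) / (b - (a + 1)) * ((t - (b + 1)) / (a - b) * g)) := by
  field_simp
  ring

/-- `m_{x_{21}−x_{22}±1} ∘ A_{22}^± ∘ A_{21}^± = m_{x_{21}−x_{22}∓1} ∘ A_{21}^± ∘ A_{22}^±`
for both sign choices. -/
theorem twisted_commutation_A21_A22 :
    mulOp (x 2 1 - x 2 2 + 1) * (Ap 2 2 * Ap 2 1) =
      mulOp (x 2 1 - x 2 2 - 1) * (Ap 2 1 * Ap 2 2) ∧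
    mulOp (x 2 1 - x 2 2 - 1) * (Am 2 2 * Am 2 1) =
      mulOp (x 2 1 - x 2 2 + 1) * (Am 2 1 * Am 2 2) := by
  have h0 : x 2 1 - x 2 2 ≠ 0 := ne0
  have h0' : x 2 2 - x 2 1 ≠ 0 := fun h => ne0 (by linear_combination -h)
  have hA : x 2 1 - (x 2 2 - 1) ≠ 0 := fun h => neP (by linear_combination h)
  have hB : x 2 2 - (x 2 1 - 1) ≠ 0 := fun h => neM (by linear_combination -h)
  have hC : x 2 1 - (x 2 2 + 1) ≠ 0 := fun h => neM (by linear_combination h)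
  have hD : x 2 2 - (x 2 1 + 1) ≠ 0 := fun h => neP (by linear_combination -h)
  constructor
  · apply LinearMap.ext; intro f
    simp only [Module.End.mul_apply, Ap, mulOp, lin, LinearMap.mulLeft_apply,
      AlgEquiv.toLinearMap_apply, aP21, aP22, map_mul, map_neg, map_div₀, map_sub,
      map_add, map_one, δ_x, Prod.mk.injEq]
    norm_num
    rw [δ_comm 2 2 2 1 f]
    linear_combination genP (x 2 1) (x 2 2) (x 3 1) (x 3 2) (x 3 3) ((δ 2 1) ((δ 2 2) f)) hA h0' hB h0
  · apply LinearMap.ext; intro f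
    simp only [Module.End.mul_apply, Am, mulOp, lin, LinearMap.mulLeft_apply,
      AlgEquiv.toLinearMap_apply, aM21, aM22, map_mul, map_div₀, map_sub,
      map_add, map_one, δ_symm_x, Prod.mk.injEq]
    norm_num
    rw [δ_symm_comm 2 2 2 1 f]
    linear_combination genM (x 2 1) (x 2 2) (x 1 1) ((δ 2 1).symm ((δ 2 2).symm f)) hC h0' hD h0
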